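/- Let S be a C-system of filters and let a ∈ C be infinite. Then dF_a = {dom[A] : A ∈ F_a} generates a normal and fine filter on P(a), where dom[A] = {dom(f) : f ∈ A}. In particular, if a is uncountable then dom[A] is stationary in P(a) for every A ∈ F_a. -/

import Mathlib

noncomputable section

namespace CSF

/-- Code a class of ZF-sets as a `ZFSet` whenever it is extensionally a set
(otherwise return `∅`). -/
def zcode (A : Set ZFSet) : ZFSet := by
  classical exact if h : ∃ z : ZFSet, z.toSet = A then h.choose else ∅

/-- Iterated union. -/
def itUnion : ℕ → ZFSet → ZFSet
  | 0, a => a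
  | n + 1, a => ZFSet.sUnion (itUnion n a)

/-- The transitive closure of a set. -/
def trcl (a : ZFSet) : ZFSet :=
  zcode {x | ∃ n : ℕ, x ∈ itUnion n a}

/-- `M` is extensional if the membership relation restricted to `M` satisfies
extensionality. -/
def Extensional (M : ZFSet) : Prop :=
  ∀ x ∈ M, ∀ y ∈ M, (∀ z ∈ M, z ∈ x ↔ z ∈ y) → x = y

/-- The Mostowski collapse map of `M`, defined by ∈-recursion:
`mos M x = {mos M y : y ∈ x ∩ M}`. -/
def mos (M : ZFSet) : ZFSet → ZFSet :=
  ZFSet.mem_wf.fix fun x IH =>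
    zcode {z | ∃ y, ∃ hy : y ∈ x, y ∈ M ∧ z = IH y hy}

/-- The function `π_M ↾ (a ∩ M)` coded as a set of Kuratowski pairs. -/
def funOf (M a : ZFSet) : ZFSet :=
  zcode {p | ∃ x, x ∈ a ∧ x ∈ M ∧ p = ZFSet.pair x (mos M x)}

/-- `O_a`: the set of restrictions `π_M ↾ (a ∩ M)` of Mostowski collapses of
extensional subsets `M ⊆ trcl(a)`. -/
def O (a : ZFSet) : Set ZFSet :=
  {f | ∃ M : ZFSet, M ⊆ trcl a ∧ Extensional M ∧ f = funOf M a}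

/-- Domain (as a class) of a coded function. -/
def zdom (f : ZFSet) : Set ZFSet := {x | ∃ y, ZFSet.pair x y ∈ f}

/-- Domain (as a set) of a coded function. -/
def zdomZ (f : ZFSet) : ZFSet := zcode (zdom f)

/-- Range (as a set) of a coded function. -/
def zranZ (f : ZFSet) : ZFSet := zcode {y | ∃ x, ZFSet.pair x y ∈ f}

/-- Application of a coded function. -/
def app (f x : ZFSet) : ZFSet :=
  zcode {z | ∃ y, ZFSet.pair x y ∈ f ∧ z ∈ y}

/-- Restriction `f ↾ a` of a coded function; this is the standard projection
`π_{ba}(f) = f ↾ a` for `f ∈ O_b`, `a ⊆ b`. -/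
def restr (f a : ZFSet) : ZFSet :=
  zcode {p | p ∈ f ∧ ∃ x y, x ∈ a ∧ p = ZFSet.pair x y}

/-- A directed set of domains: closed under subsets and (binary) unions, with
transitive union. -/
structure IsDirectedDomains (C : Set ZFSet) : Prop where
  subset_mem : ∀ a ∈ C, ∀ b : ZFSet, b ⊆ a → b ∈ C
  union_mem : ∀ a ∈ C, ∀ b ∈ C, a ∪ b ∈ C
  transitive : ∀ a ∈ C, ∀ x, x ∈ a → ∀ y, y ∈ x → ({y} : ZFSet) ∈ C

/-- A `C`-system of filters: a family of non-trivial filters `F a` on `P(O_a)` for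
`a ∈ C`, satisfying fineness, compatibility and normality. -/
structure IsCSystemOfFilters (C : Set ZFSet) (F : ZFSet → Set (Set ZFSet)) : Prop where
  directed : IsDirectedDomains C
  sets_subset : ∀ a ∈ C, ∀ A ∈ F a, A ⊆ O a
  top_mem : ∀ a ∈ C, O a ∈ F a
  empty_not_mem : ∀ a ∈ C, (∅ : Set ZFSet) ∉ F a
  inter_mem : ∀ a ∈ C, ∀ A ∈ F a, ∀ B ∈ F a, A ∩ B ∈ F a
  superset_mem : ∀ a ∈ C, ∀ A ∈ F a, ∀ B : Set ZFSet, A ⊆ B → B ⊆ O a → B ∈ F a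
  fineness : ∀ a ∈ C, ∀ x, x ∈ a → {f | f ∈ O a ∧ x ∈ zdom f} ∈ F a
  compat : ∀ a ∈ C, ∀ b ∈ C, a ⊆ b → ∀ A : Set ZFSet, A ⊆ O a →
    (A ∈ F a ↔ {f | f ∈ O b ∧ restr f a ∈ A} ∈ F b)
  normality : ∀ a ∈ C, ∀ A : Set ZFSet, A ⊆ O a → (O a \ A) ∉ F a →
    ∀ u : ZFSet → ZFSet, (∀ f ∈ A, ∃ x ∈ zdom f, u f = app f x ∨ u f ∈ app f x) →
    ∃ b ∈ C, a ⊆ b ∧ ∃ B : Set ZFSet, B ⊆ {f | f ∈ O b ∧ restr f a ∈ A} ∧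
      (O b \ B) ∉ F b ∧ ∃ y, y ∈ b ∧ ∀ f ∈ B, u (restr f a) = app f y

/-- A `C`-system of ultrafilters. -/
structure IsCSystemOfUltrafilters (C : Set ZFSet) (F : ZFSet → Set (Set ZFSet))
    extends IsCSystemOfFilters C F : Prop where
  ultra : ∀ a ∈ C, ∀ A : Set ZFSet, A ⊆ O a → (A ∈ F a ∨ (O a \ A) ∈ F a)

/-- Representatives of elements of the ultrapower `Ult(V,S)`: a pair of a domain
`a ∈ C` and a function `u : O_a → V`. -/
abbrev PreU : Type 1 := ZFSet × (ZFSet → ZFSet)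

/-- Equality of ultrapower representatives: `u =_S v`. -/
def eqU (F : ZFSet → Set (Set ZFSet)) (p q : PreU) : Prop :=
  {f | f ∈ O (p.1 ∪ q.1) ∧ p.2 (restr f p.1) = q.2 (restr f q.1)} ∈ F (p.1 ∪ q.1)

/-- Membership of ultrapower representatives: `u ∈_S v`. -/
def memU (F : ZFSet → Set (Set ZFSet)) (p q : PreU) : Prop :=
  {f | f ∈ O (p.1 ∪ q.1) ∧ p.2 (restr f p.1) ∈ q.2 (restr f q.1)} ∈ F (p.1 ∪ q.1)

/-- The constant function `c_x`, representing `j(x)`. -/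
def jrep (x : ZFSet) : PreU := (∅, fun _ => x)

/-- The projection `proj_x : O_{{x}} → V`, `f ↦ f(x)`, representing `x`. -/
def projRep (x : ZFSet) : PreU := ({x}, fun f => app f x)

end CSF

namespace CSF

/-- The filter on `P(a)` generated by `dF_a = {dom[A] : A ∈ F_a}`. -/
def dFil (F : ZFSet → Set (Set ZFSet)) (a : ZFSet) : Set (Set ZFSet) :=
  {D | D ⊆ {b : ZFSet | b ⊆ a} ∧ ∃ A ∈ F a, ∀ f ∈ A, zdomZ f ∈ D}

end CSF


/-! ### Auxiliary lemmas (not part of the pinned statement) -/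

theorem ZFSet.mem_toSet (a u : ZFSet) : a ∈ u.toSet ↔ a ∈ u := Iff.rfl

theorem ZFSet.toSet_injective : Function.Injective ZFSet.toSet := SetLike.coe_injective

namespace CSF
universe u

theorem zcode_toSet {A : Set ZFSet.{u}} (h : ∃ z : ZFSet, z.toSet = A) :
    (zcode A).toSet = A := by
  classical
  rw [zcode]; simp only [h, dif_pos]
  exact h.choose_spec

theorem mem_zcode {A : Set ZFSet.{u}} (h : ∃ z : ZFSet, z.toSet = A) {x : ZFSet.{u}} :
    x ∈ zcode A ↔ x ∈ A := by
  rw [← ZFSet.mem_toSet, zcode_toSet h]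

theorem zcode_toSet_self (z : ZFSet.{u}) : zcode z.toSet = z :=
  ZFSet.toSet_injective (zcode_toSet ⟨z, rfl⟩)

theorem zdom_isSet (f : ZFSet.{u}) : ∃ z : ZFSet, z.toSet = zdom f := by
  refine ⟨ZFSet.sep (fun x => ∃ y, ZFSet.pair x y ∈ f) (ZFSet.sUnion (ZFSet.sUnion f) : ZFSet), Set.ext fun x => ?_⟩
  simp only [ZFSet.mem_toSet, ZFSet.mem_sep, ZFSet.mem_sUnion, zdom, Set.mem_setOf_eq]
  constructor
  · rintro ⟨-, h⟩; exact h
  · rintro ⟨y, hy⟩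
    refine ⟨⟨{x}, ⟨ZFSet.pair x y, hy, ?_⟩, ZFSet.mem_singleton.2 rfl⟩, y, hy⟩
    simp [ZFSet.pair]

theorem mem_zdomZ {f x : ZFSet.{u}} : x ∈ zdomZ f ↔ ∃ y, ZFSet.pair x y ∈ f :=
  mem_zcode (zdom_isSet f)

theorem mem_funOf {M a p : ZFSet.{u}} :
    p ∈ funOf M a ↔ ∃ x, x ∈ a ∧ x ∈ M ∧ p = ZFSet.pair x (mos.{u,u} M x) := by
  refine mem_zcode ?_
  haveI : ZFSet.Definable₁ (fun x => ZFSet.pair x (mos.{u,u} M x)) := Classical.allZFSetDefinable _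
  refine ⟨ZFSet.image (fun x => ZFSet.pair x (mos.{u,u} M x)) (ZFSet.sep (· ∈ M) a),
    Set.ext fun p => ?_⟩
  simp only [ZFSet.mem_toSet, ZFSet.mem_image, ZFSet.mem_sep, Set.mem_setOf_eq]
  constructor
  · rintro ⟨x, ⟨hx, hxM⟩, rfl⟩; exact ⟨x, hx, hxM, rfl⟩
  · rintro ⟨x, hx, hxM, rfl⟩; exact ⟨x, ⟨hx, hxM⟩, rfl⟩

theorem mos_def (M x : ZFSet.{u}) :
    mos.{u,u} M x = zcode {z | ∃ y, y ∈ x ∧ y ∈ M ∧ z = mos.{u,u} M y} := by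
  unfold mos
  rw [WellFounded.fix_eq]
  simp only [exists_prop]

theorem mem_mos {M x z : ZFSet.{u}} :
    z ∈ mos.{u,u} M x ↔ ∃ y, y ∈ x ∧ y ∈ M ∧ z = mos.{u,u} M y := by
  rw [mos_def]
  refine mem_zcode ?_
  haveI : ZFSet.Definable₁ (mos.{u,u} M) := Classical.allZFSetDefinable _
  refine ⟨ZFSet.image (mos.{u,u} M) (ZFSet.sep (· ∈ M) x), Set.ext fun z => ?_⟩
  simp only [ZFSet.mem_toSet, ZFSet.mem_image, ZFSet.mem_sep, Set.mem_setOf_eq]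
  constructor
  · rintro ⟨y, ⟨hy, hyM⟩, rfl⟩; exact ⟨y, hy, hyM, rfl⟩
  · rintro ⟨y, hy, hyM, rfl⟩; exact ⟨y, ⟨hy, hyM⟩, rfl⟩

theorem mos_inj {M : ZFSet.{u}} (hM : Extensional M) :
    ∀ x, x ∈ M → ∀ y, y ∈ M → mos.{u,u} M x = mos.{u,u} M y → x = y := by
  intro x
  induction x using ZFSet.inductionOn with
  | h x IH =>
    intro hxM y hyM heq
    refine hM x hxM y hyM fun z hzM => ⟨fun hzx => ?_, fun hzy => ?_⟩
    · have : mos.{u,u} M z ∈ mos.{u,u} M y := by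
        rw [← heq]; exact mem_mos.2 ⟨z, hzx, hzM, rfl⟩
      obtain ⟨w, hwy, hwM, hw⟩ := mem_mos.1 this
      exact (IH z hzx hzM w hwM hw) ▸ hwy
    · have : mos.{u,u} M z ∈ mos.{u,u} M x := by
        rw [heq]; exact mem_mos.2 ⟨z, hzy, hzM, rfl⟩
      obtain ⟨w, hwx, hwM, hw⟩ := mem_mos.1 this
      exact (IH w hwx hwM z hzM hw.symm) ▸ hwx

theorem mem_restr {f a p : ZFSet.{u}} :
    p ∈ restr f a ↔ p ∈ f ∧ ∃ x y, x ∈ a ∧ p = ZFSet.pair x y := by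
  refine mem_zcode ?_
  refine ⟨ZFSet.sep (fun p => ∃ x y, x ∈ a ∧ p = ZFSet.pair x y) f, Set.ext fun p => ?_⟩
  simp only [ZFSet.mem_toSet, ZFSet.mem_sep, Set.mem_setOf_eq]

theorem pair_mem_restr {f a x y : ZFSet.{u}} :
    ZFSet.pair x y ∈ restr f a ↔ ZFSet.pair x y ∈ f ∧ x ∈ a := by
  rw [mem_restr]
  constructor
  · rintro ⟨hf, x', y', hx', hp⟩
    obtain ⟨rfl, rfl⟩ := ZFSet.pair_injective hp
    exact ⟨hf, hx'⟩
  · rintro ⟨hf, hx⟩; exact ⟨hf, x, y, hx, rfl⟩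

theorem app_restr {f a x : ZFSet.{u}} (hx : x ∈ a) : app (restr f a) x = app f x := by
  unfold app
  congr 1
  ext z
  simp only [Set.mem_setOf_eq, pair_mem_restr]
  exact ⟨fun ⟨y, ⟨h1, _⟩, h2⟩ => ⟨y, h1, h2⟩, fun ⟨y, h1, h2⟩ => ⟨y, ⟨h1, hx⟩, h2⟩⟩

theorem mem_zdomZ_restr {f a x : ZFSet.{u}} :
    x ∈ zdomZ (restr f a) ↔ x ∈ zdomZ f ∧ x ∈ a := by
  simp only [mem_zdomZ, pair_mem_restr]
  exact ⟨fun ⟨y, h1, h2⟩ => ⟨⟨y, h1⟩, h2⟩, fun ⟨⟨y, h1⟩, h2⟩ => ⟨y, h1, h2⟩⟩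

theorem pair_mem_funOf {M b x y : ZFSet.{u}} :
    ZFSet.pair x y ∈ funOf M b ↔ x ∈ b ∧ x ∈ M ∧ y = mos.{u,u} M x := by
  rw [mem_funOf]
  constructor
  · rintro ⟨x', hx', hx'M, hp⟩
    obtain ⟨rfl, rfl⟩ := ZFSet.pair_injective hp
    exact ⟨hx', hx'M, rfl⟩
  · rintro ⟨hx, hxM, rfl⟩; exact ⟨x, hx, hxM, rfl⟩

theorem mem_zdomZ_funOf {M b x : ZFSet.{u}} :
    x ∈ zdomZ (funOf M b) ↔ x ∈ b ∧ x ∈ M := by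
  simp only [mem_zdomZ, pair_mem_funOf]
  exact ⟨fun ⟨y, h1, h2, _⟩ => ⟨h1, h2⟩, fun ⟨h1, h2⟩ => ⟨mos.{u,u} M x, h1, h2, rfl⟩⟩

theorem app_funOf {M b x : ZFSet.{u}} (hx : x ∈ b) (hxM : x ∈ M) :
    app (funOf M b) x = mos.{u,u} M x := by
  unfold app
  have : {z | ∃ y, ZFSet.pair x y ∈ funOf M b ∧ z ∈ y} = (mos.{u,u} M x).toSet := by
    ext z
    simp only [Set.mem_setOf_eq, pair_mem_funOf, ZFSet.mem_toSet]
    constructor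
    · rintro ⟨y, ⟨_, _, rfl⟩, hz⟩; exact hz
    · intro hz; exact ⟨mos.{u,u} M x, ⟨hx, hxM, rfl⟩, hz⟩
  rw [this, zcode_toSet_self]


end CSF

namespace CSFAux
universe u

structure NF (a : ZFSet.{u}) (Fil : Set (Set ZFSet.{u})) : Prop where
  subP : ∀ D ∈ Fil, D ⊆ {b : ZFSet.{u} | b ⊆ a}
  up : ∀ D ∈ Fil, ∀ E : Set ZFSet.{u}, D ⊆ E → E ⊆ {b : ZFSet.{u} | b ⊆ a} → E ∈ Fil
  inter : ∀ D ∈ Fil, ∀ D' ∈ Fil, D ∩ D' ∈ Fil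
  top : {b : ZFSet.{u} | b ⊆ a} ∈ Fil
  nebot : (∅ : Set ZFSet.{u}) ∉ Fil
  fine : ∀ x, x ∈ a → {b : ZFSet.{u} | b ⊆ a ∧ x ∈ b} ∈ Fil
  norm : ∀ D : Set ZFSet.{u}, D ⊆ {b : ZFSet.{u} | b ⊆ a} →
    ({b : ZFSet.{u} | b ⊆ a} \ D) ∉ Fil →
    ∀ u : ZFSet.{u} → ZFSet.{u}, (∀ b ∈ D, u b ∈ b) →
    ∃ x : ZFSet.{u}, ({b : ZFSet.{u} | b ⊆ a} \ {b ∈ D | u b = x}) ∉ Fil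

namespace NF

variable {a : ZFSet.{u}} {Fil : Set (Set ZFSet.{u})}

/-- positivity -/
def Pos (a : ZFSet.{u}) (Fil : Set (Set ZFSet.{u})) (D : Set ZFSet.{u}) : Prop :=
  ({b : ZFSet.{u} | b ⊆ a} \ D) ∉ Fil

theorem pos_nonempty (h : NF a Fil) {D : Set ZFSet.{u}} (hD : Pos a Fil D) :
    D.Nonempty := by
  rw [Set.nonempty_iff_ne_empty]
  rintro rfl
  exact hD (by simpa using h.top)

theorem pos_of_mem (h : NF a Fil) {D : Set ZFSet.{u}} (hD : D ∈ Fil) : Pos a Fil D := by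
  intro hc
  have := h.inter D hD _ hc
  rw [Set.inter_diff_self] at this
  exact h.nebot this

theorem pos_inter (h : NF a Fil) {D E : Set ZFSet.{u}} (hD : Pos a Fil D) (hE : E ∈ Fil) :
    Pos a Fil (D ∩ E) := by
  intro hc
  apply hD
  refine h.up _ (h.inter _ hc _ hE) _ ?_ fun b hb => hb.1
  rintro b ⟨⟨hba, hbc⟩, hbE⟩
  exact ⟨hba, fun hbD => hbc ⟨hbD, hbE⟩⟩

theorem pos_inter_nonempty (h : NF a Fil) {D E : Set ZFSet.{u}} (hD : Pos a Fil D)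
    (hE : E ∈ Fil) : (D ∩ E).Nonempty :=
  pos_nonempty h (pos_inter h hD hE)

theorem mem_of_not_pos_compl (h : NF a Fil) {D : Set ZFSet.{u}}
    (hDP : D ⊆ {b : ZFSet.{u} | b ⊆ a})
    (hD : ¬ Pos a Fil ({b : ZFSet.{u} | b ⊆ a} \ D)) : D ∈ Fil := by
  rw [Pos, not_not, Set.diff_diff_cancel_left hDP] at hD
  exact hD

/-- closure under diagonal intersections -/
theorem diag (h : NF a Fil) (E : ZFSet.{u} → Set ZFSet.{u})
    (hE : ∀ x, x ∈ a → E x ∈ Fil) :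
    {b : ZFSet.{u} | b ⊆ a ∧ ∀ x, x ∈ b → b ∈ E x} ∈ Fil := by
  classical
  set T : Set ZFSet.{u} := {b : ZFSet.{u} | b ⊆ a ∧ ∀ x, x ∈ b → b ∈ E x} with hT
  refine mem_of_not_pos_compl h (fun b hb => hb.1) ?_
  intro hpos
  set S : Set ZFSet.{u} := {b : ZFSet.{u} | b ⊆ a} \ T with hSdef
  set v : ZFSet.{u} → ZFSet.{u} := fun b =>
    if hb : ∃ x, x ∈ b ∧ b ∉ E x then hb.choose else ∅ with hv
  have hex : ∀ b ∈ S, ∃ x, x ∈ b ∧ b ∉ E x := by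
    rintro b ⟨hba, hbT⟩
    by_contra hc
    push_neg at hc
    exact hbT ⟨hba, fun x hx => hc x hx⟩
  have hch : ∀ b ∈ S, v b ∈ b ∧ b ∉ E (v b) := by
    intro b hb
    have := hex b hb
    simp only [hv, dif_pos this]
    exact this.choose_spec
  obtain ⟨x₀, hx₀⟩ := h.norm S (fun b hb => hb.1) hpos v fun b hb => (hch b hb).1
  have hx₀a : x₀ ∈ a := by
    obtain ⟨b, hbS, hbx⟩ := pos_nonempty h hx₀
    exact hbS.1 (hbx ▸ (hch b hbS).1)
  obtain ⟨b, ⟨hbS, hbx⟩, hbE⟩ := pos_inter_nonempty h hx₀ (hE x₀ hx₀a)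
  exact (hch b hbS).2 (hbx ▸ hbE)

/-- closure under `n`-fold diagonal intersections -/
theorem finDiag (h : NF a Fil) (n : ℕ) (E : Finset ZFSet.{u} → Set ZFSet.{u})
    (hE : ∀ s : Finset ZFSet.{u}, ↑s ⊆ a.toSet → E s ∈ Fil) :
    {b : ZFSet.{u} | b ⊆ a ∧
      ∀ s : Finset ZFSet.{u}, s.card = n → ↑s ⊆ b.toSet → b ∈ E s} ∈ Fil := by
  classical
  induction n generalizing E with
  | zero =>
    have h0 : E ∅ ∈ Fil := hE ∅ (by simp)
    refine h.up _ (h.inter _ h.top _ h0) _ ?_ fun b hb => hb.1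
    rintro b ⟨hba, hbE⟩
    refine ⟨hba, fun s hs _ => ?_⟩
    rwa [Finset.card_eq_zero.1 hs]
  | succ n IH =>
    set G : ZFSet.{u} → Set ZFSet.{u} := fun x =>
      {b : ZFSet.{u} | b ⊆ a ∧ ∀ s : Finset ZFSet.{u}, s.card = n → ↑s ⊆ b.toSet →
        b ∈ (if x ∈ s then {b' : ZFSet.{u} | b' ⊆ a} else E (insert x s))} with hG
    have hGmem : ∀ x, x ∈ a → G x ∈ Fil := by
      intro x hx
      refine IH (fun s => if x ∈ s then {b' : ZFSet.{u} | b' ⊆ a} else E (insert x s)) ?_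
      intro s hs
      by_cases hxs : x ∈ s
      · simpa [hxs] using h.top
      · have : ↑(insert x s) ⊆ a.toSet := by
          rw [Finset.coe_insert]
          exact Set.insert_subset (ZFSet.mem_toSet x a |>.2 hx) hs
        simpa [hxs] using hE _ this
    have hdiag := diag h G hGmem
    refine h.up _ hdiag _ ?_ fun b hb => hb.1
    rintro b ⟨hba, hb⟩
    refine ⟨hba, fun s hcard hsb => ?_⟩
    have hsne : s.Nonempty := Finset.card_pos.1 (by omega)
    obtain ⟨x, hxs⟩ := hsne
    have hxb : x ∈ b := (ZFSet.mem_toSet x b).1 (hsb (Finset.mem_coe.2 hxs))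
    have hbG := hb x hxb
    have h1 := hbG.2 (s.erase x) (by rw [Finset.card_erase_of_mem hxs, hcard]; rfl)
      (fun z hz => hsb (Finset.mem_coe.2 (Finset.mem_of_mem_erase (Finset.mem_coe.1 hz))))
    rw [if_neg (Finset.notMem_erase x s), Finset.insert_erase hxs] at h1
    exact h1

/-- countable completeness -/
theorem ctble (h : NF a Fil) (hinf : a.toSet.Infinite) (D : ℕ → Set ZFSet.{u})
    (hD : ∀ n, D n ∈ Fil) :
    {b : ZFSet.{u} | b ⊆ a ∧ ∀ n, b ∈ D n} ∈ Fil := by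
  classical
  set x : ℕ → ZFSet.{u} := fun n => (Set.Infinite.natEmbedding a.toSet hinf n).1 with hxdef
  have hxa : ∀ n, x n ∈ a := fun n => (ZFSet.mem_toSet _ _).1 (Set.Infinite.natEmbedding a.toSet hinf n).2
  have hxinj : Function.Injective x := fun m n hmn => by
    have := (Set.Infinite.natEmbedding a.toSet hinf).injective (Subtype.ext hmn)
    exact this
  -- cumulative intersections
  set D' : ℕ → Set ZFSet.{u} := fun n => Nat.rec (D 0) (fun k Dk => Dk ∩ D (k + 1)) n with hD'
  have hD'mem : ∀ n, D' n ∈ Fil := by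
    intro n
    induction n with
    | zero => exact hD 0
    | succ k IHk => exact h.inter _ IHk _ (hD (k + 1))
  have hD'sub : ∀ n k, k ≤ n → D' n ⊆ D k := by
    intro n
    induction n with
    | zero => intro k hk; interval_cases k; exact le_refl _
    | succ m IHm =>
      intro k hk
      rcases Nat.lt_or_ge k (m + 1) with hlt | hge
      · exact fun b hb => IHm k (Nat.lt_succ_iff.1 hlt) hb.1
      · have : k = m + 1 := le_antisymm hk hge
        subst this
        exact fun b hb => hb.2
  -- the diagonal family
  set E : ZFSet.{u} → Set ZFSet.{u} := fun z =>
    {b : ZFSet.{u} | b ⊆ a ∧ ∀ n, z = x (n + 1) → (b ∈ D' n ∧ x n ∈ b)} with hE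
  have hEmem : ∀ z, z ∈ a → E z ∈ Fil := by
    intro z hz
    by_cases hzx : ∃ n, x (n + 1) = z
    · obtain ⟨n, rfl⟩ := hzx
      have hW : D' n ∩ {b : ZFSet.{u} | b ⊆ a ∧ x n ∈ b} ∈ Fil :=
        h.inter _ (hD'mem n) _ (h.fine (x n) (hxa n))
      refine h.up _ hW _ ?_ fun b hb => hb.1
      rintro b ⟨hbD, hba, hbx⟩
      refine ⟨hba, fun m hm => ?_⟩
      have : m = n := by
        have := hxinj hm.symm
        omega
      subst this
      exact ⟨hbD, hbx⟩
    · refine h.up _ h.top _ ?_ fun b hb => hb.1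
      intro b hb
      exact ⟨hb, fun m hm => absurd ⟨m, hm.symm⟩ hzx⟩
  have hdiag := diag h E hEmem
  set W : Set ZFSet.{u} :=
    {b : ZFSet.{u} | b ⊆ a ∧ ∀ z, z ∈ b → b ∈ E z} ∩ {b : ZFSet.{u} | b ⊆ a ∧ x 0 ∈ b}
    with hW
  have hWmem : W ∈ Fil := h.inter _ hdiag _ (h.fine (x 0) (hxa 0))
  -- the target set
  set T : Set ZFSet.{u} := {b : ZFSet.{u} | b ⊆ a ∧ ∀ n, b ∈ D n} with hTdef
  refine mem_of_not_pos_compl h (fun b hb => hb.1) ?_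
  intro hpos
  have hpos' := pos_inter h hpos hWmem
  set S : Set ZFSet.{u} := ({b : ZFSet.{u} | b ⊆ a} \ T) ∩ W with hSdef
  -- every b in S admits a break point
  have hbreak : ∀ b ∈ S, ∃ m, x m ∈ b ∧ x (m + 1) ∉ b := by
    rintro b ⟨⟨hba, hbT⟩, ⟨_, hcl⟩, ⟨_, hb0⟩⟩
    by_contra hc
    push_neg at hc
    have hall : ∀ m, x m ∈ b := by
      intro m
      induction m with
      | zero => exact hb0
      | succ k IHk => exact hc k IHk
    refine hbT ⟨hba, fun n => ?_⟩
    have := (hcl (x (n + 1)) (hall (n + 1))).2 n rfl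
    exact hD'sub n n (le_refl n) this.1
  set v : ZFSet.{u} → ZFSet.{u} := fun b =>
    if hb : ∃ m, x m ∈ b ∧ x (m + 1) ∉ b then x (Nat.find hb) else ∅ with hv
  have hch : ∀ b ∈ S, v b ∈ b := by
    intro b hb
    have hex := hbreak b hb
    simp only [hv, dif_pos hex]
    exact (Nat.find_spec hex).1
  obtain ⟨x₀, hx₀⟩ := h.norm S (fun b hb => hb.1.1) hpos' v hch
  obtain ⟨b₀, hb₀S, hb₀x⟩ := pos_nonempty h hx₀
  have hex₀ := hbreak b₀ hb₀S
  set m₀ : ℕ := Nat.find hex₀ with hm₀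
  have hx₀eq : x₀ = x m₀ := by
    rw [← hb₀x]; simp only [hv, dif_pos hex₀]; rfl
  have hmiss : ∀ b ∈ {b ∈ S | v b = x₀}, x (m₀ + 1) ∉ b := by
    rintro b ⟨hbS, hbv⟩
    have hex := hbreak b hbS
    have : x (Nat.find hex) = x m₀ := by
      rw [← hx₀eq, ← hbv]; simp only [hv, dif_pos hex]
    have := hxinj this
    rw [← this]
    exact (Nat.find_spec hex).2
  obtain ⟨b₁, hb₁, hb₁m⟩ :=
    pos_inter_nonempty h hx₀ (h.fine (x (m₀ + 1)) (hxa (m₀ + 1)))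
  exact hmiss b₁ hb₁ hb₁m.2

/-- the club of closure points of `g` is in the filter -/
theorem club (h : NF a Fil) (hinf : a.toSet.Infinite) (g : Finset ZFSet.{u} → ZFSet.{u})
    (hg : ∀ s : Finset ZFSet.{u}, ↑s ⊆ a.toSet → g s ∈ a) :
    {b : ZFSet.{u} | b ⊆ a ∧ ∀ s : Finset ZFSet.{u}, ↑s ⊆ b.toSet → g s ∈ b} ∈ Fil := by
  set E : Finset ZFSet.{u} → Set ZFSet.{u} := fun s => {b : ZFSet.{u} | b ⊆ a ∧ g s ∈ b}
    with hE
  have hEmem : ∀ s : Finset ZFSet.{u}, ↑s ⊆ a.toSet → E s ∈ Fil := fun s hs =>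
    h.fine (g s) (hg s hs)
  set D : ℕ → Set ZFSet.{u} := fun n =>
    {b : ZFSet.{u} | b ⊆ a ∧
      ∀ s : Finset ZFSet.{u}, s.card = n → ↑s ⊆ b.toSet → b ∈ E s} with hD
  have hDmem : ∀ n, D n ∈ Fil := fun n => finDiag h n E hEmem
  have hct := ctble h hinf D hDmem
  refine h.up _ hct _ ?_ fun b hb => hb.1
  rintro b ⟨hba, hb⟩
  refine ⟨hba, fun s hs => ?_⟩
  exact ((hb s.card).2 s rfl hs).2

end NF

end CSFAux

open CSF

/-- For a `C`-system of filters `S` and infinite `a ∈ C`, `dF_a = {dom[A] : A ∈ F_a}`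
generates a normal and fine (non-trivial) filter on `P(a)`; in particular, if `a` is
uncountable then `dom[A]` is stationary in `P(a)` for every `A ∈ F_a`. -/
theorem stmt_5 (C : Set ZFSet) (F : ZFSet → Set (Set ZFSet))
    (hS : IsCSystemOfFilters C F) (a : ZFSet) (ha : a ∈ C)
    (hinf : a.toSet.Infinite) :
    -- non-triviality
    ((∅ : Set ZFSet) ∉ dFil F a) ∧
    -- closure under intersections (upward closure in `P(a)` holds by definition)
    (∀ D ∈ dFil F a, ∀ D' ∈ dFil F a, D ∩ D' ∈ dFil F a) ∧
    -- fineness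
    (∀ x, x ∈ a → {b : ZFSet | b ⊆ a ∧ x ∈ b} ∈ dFil F a) ∧
    -- normality: every choice function on a positive set is constant on a positive set
    (∀ D : Set ZFSet, D ⊆ {b : ZFSet | b ⊆ a} →
      ({b : ZFSet | b ⊆ a} \ D) ∉ dFil F a →
      ∀ u : ZFSet → ZFSet, (∀ b ∈ D, u b ∈ b) →
      ∃ x : ZFSet, ({b : ZFSet | b ⊆ a} \ {b ∈ D | u b = x}) ∉ dFil F a) ∧
    -- stationarity of `dom[A]` in `P(a)` for uncountable `a`
    (¬ a.toSet.Countable → ∀ A ∈ F a, ∀ g : Finset ZFSet → ZFSet,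
      (∀ s : Finset ZFSet, ↑s ⊆ a.toSet → g s ∈ a) →
      ∃ f ∈ A, ∀ s : Finset ZFSet, ↑s ⊆ (zdomZ f).toSet → g s ∈ zdomZ f) := by
  classical
  have hdomsub : ∀ f ∈ O a, zdomZ f ⊆ a := by
    rintro f ⟨M, -, -, rfl⟩
    rw [ZFSet.subset_def]
    intro x hx
    exact (mem_zdomZ_funOf.1 hx).1
  have part1 : (∅ : Set ZFSet) ∉ dFil F a := by
    rintro ⟨-, A, hA, hall⟩
    have hne : A.Nonempty :=
      Set.nonempty_iff_ne_empty.2 fun h0 => hS.empty_not_mem a ha (h0 ▸ hA)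
    obtain ⟨f, hf⟩ := hne
    exact hall f hf
  have part2 : ∀ D ∈ dFil F a, ∀ D' ∈ dFil F a, D ∩ D' ∈ dFil F a := by
    rintro D ⟨hDP, A, hA, hDA⟩ D' ⟨hD'P, A', hA', hD'A⟩
    exact ⟨fun b hb => hDP hb.1, A ∩ A', hS.inter_mem a ha A hA A' hA',
      fun f hf => ⟨hDA f hf.1, hD'A f hf.2⟩⟩
  have part3 : ∀ x, x ∈ a → {b : ZFSet | b ⊆ a ∧ x ∈ b} ∈ dFil F a := by
    intro x hx
    refine ⟨fun b hb => hb.1, {f | f ∈ O a ∧ x ∈ zdom f}, hS.fineness a ha x hx, ?_⟩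
    rintro f ⟨hfO, hxf⟩
    exact ⟨hdomsub f hfO, mem_zdomZ.2 hxf⟩
  have part4 : ∀ D : Set ZFSet, D ⊆ {b : ZFSet | b ⊆ a} →
      ({b : ZFSet | b ⊆ a} \ D) ∉ dFil F a →
      ∀ u : ZFSet → ZFSet, (∀ b ∈ D, u b ∈ b) →
      ∃ x : ZFSet, ({b : ZFSet | b ⊆ a} \ {b ∈ D | u b = x}) ∉ dFil F a := by
    intro D hDP hDpos u hu
    set A : Set ZFSet := {f | f ∈ O a ∧ zdomZ f ∈ D} with hAdef
    have hAsub : A ⊆ O a := fun f hf => hf.1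
    have hApos : (O a \ A) ∉ F a := by
      intro hc
      refine hDpos ⟨fun b hb => hb.1, O a \ A, hc, ?_⟩
      rintro f ⟨hfO, hfA⟩
      exact ⟨hdomsub f hfO, fun hfD => hfA ⟨hfO, hfD⟩⟩
    set v : ZFSet → ZFSet := fun g0 => app g0 (u (zdomZ g0)) with hvdef
    have hreg : ∀ f ∈ A, ∃ x ∈ zdom f, v f = app f x ∨ v f ∈ app f x := by
      rintro f ⟨hfO, hfD⟩
      have := hu (zdomZ f) hfD
      exact ⟨u (zdomZ f), mem_zdomZ.1 this, Or.inl rfl⟩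
    obtain ⟨b, hbC, hab, B, hBsub, hBpos, y, hyb, hyeq⟩ :=
      hS.normality a ha A hAsub hApos v hreg
    have hY := hS.fineness b hbC y hyb
    set B' : Set ZFSet := B ∩ {f | f ∈ O b ∧ y ∈ zdom f} with hB'def
    have hB'pos : (O b \ B') ∉ F b := by
      intro hc
      apply hBpos
      have h1 := hS.inter_mem b hbC _ hc _ hY
      refine hS.superset_mem b hbC _ h1 (O b \ B) ?_ fun f hf => hf.1
      rintro f ⟨⟨hfO, hfB'⟩, hfY⟩
      exact ⟨hfO, fun hfB => hfB' ⟨hfB, hfY⟩⟩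
    have key : ∀ f ∈ B', u (zdomZ (restr f a)) = y := by
      rintro f ⟨hfB, hfO, hyf⟩
      obtain ⟨N, hNsub, hNext, rfl⟩ := hfO
      have hgA : restr (funOf N b) a ∈ A := (hBsub hfB).2
      have hxg : u (zdomZ (restr (funOf N b) a)) ∈ zdomZ (restr (funOf N b) a) :=
        hu _ hgA.2
      have hxg2 := mem_zdomZ_restr.1 hxg
      have hxg3 := mem_zdomZ_funOf.1 hxg2.1
      have hy3 := mem_zdomZ_funOf.1 (mem_zdomZ.2 hyf)
      have e1 : v (restr (funOf N b) a) = app (funOf N b) y := hyeq _ hfB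
      have e2 : v (restr (funOf N b) a) =
          mos N (u (zdomZ (restr (funOf N b) a))) := by
        show app _ _ = _
        rw [app_restr hxg2.2, app_funOf hxg3.1 hxg3.2]
      exact mos_inj hNext _ hxg3.2 _ hy3.2 (by rw [← e2, e1, app_funOf hy3.1 hy3.2])
    refine ⟨y, fun hcon => ?_⟩
    obtain ⟨-, A₀, hA₀, hall⟩ := hcon
    have hE : {f | f ∈ O b ∧ restr f a ∈ A₀} ∈ F b :=
      (hS.compat a ha b hbC hab A₀ (hS.sets_subset a ha A₀ hA₀)).1 hA₀
    have hne : ∃ f, f ∈ B' ∧ f ∈ O b ∧ restr f a ∈ A₀ := by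
      by_contra hc
      apply hB'pos
      refine hS.superset_mem b hbC _ hE (O b \ B') ?_ fun f hf => hf.1
      rintro f ⟨hfO, hfA₀⟩
      exact ⟨hfO, fun hfB' => hc ⟨f, hfB', hfO, hfA₀⟩⟩
    obtain ⟨f, hfB', hfO, hfA₀⟩ := hne
    have h1 : zdomZ (restr f a) ∈ D := (hBsub hfB'.1).2.2
    have h3 := hall (restr f a) hfA₀
    exact h3.2 ⟨h1, key f hfB'⟩
  refine ⟨part1, part2, part3, part4, ?_⟩
  intro _hunc A hA g hg
  have hNF : CSFAux.NF a (dFil F a) :=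
    { subP := fun D hD => hD.1
      up := fun D hD E hDE hEP =>
        ⟨hEP, hD.2.elim fun A0 hA0 => ⟨A0, hA0.1, fun f hf => hDE (hA0.2 f hf)⟩⟩
      inter := part2
      top := ⟨fun b hb => hb, O a, hS.top_mem a ha, fun f hf => hdomsub f hf⟩
      nebot := part1
      fine := part3
      norm := part4 }
  have hclub := CSFAux.NF.club hNF hinf g hg
  obtain ⟨-, A', hA', hall⟩ := hclub
  have hAA' : A ∩ A' ∈ F a := hS.inter_mem a ha A hA A' hA'
  have hne : (A ∩ A').Nonempty :=
    Set.nonempty_iff_ne_empty.2 fun h0 => hS.empty_not_mem a ha (h0 ▸ hAA')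
  obtain ⟨f, hfA, hfA'⟩ := hne
  exact ⟨f, hfA, fun s hs => (hall f hfA').2 s hs⟩
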